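/- The homomorphism domination exponent HDE(F_1; P_t) equals t+2 for odd t ≥ 1, where F_1 is the disjoint union of two isolated vertices and t copies of the path P_{t+2}. -/

import Mathlib

/-- The number of graph homomorphisms from `F` to `G`. -/
noncomputable def homCount {α β : Type*} (F : SimpleGraph α) (G : SimpleGraph β) : ℕ :=
  Nat.card (F →g G)

/-- The homomorphism domination exponent `HDE(F₁; F₂)`: the supremum of all
`c` such that `|Hom(F₁; G)| ≥ |Hom(F₂; G)|^c` for every graph `G`. -/
noncomputable def hde {α β : Type*} (F₁ : SimpleGraph α) (F₂ : SimpleGraph β) : ℝ :=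
  sSup {c : ℝ | ∀ (n : ℕ) (G : SimpleGraph (Fin n)),
    (homCount F₁ G : ℝ) ≥ (homCount F₂ G : ℝ) ^ c}

/-- `F₁ t`: the disjoint union of two isolated vertices and `t` copies of the
path `P_{t+2}`. -/
def F₁ (t : ℕ) : SimpleGraph (Fin 2 ⊕ Fin t × Fin (t + 3)) :=
  (⊥ : SimpleGraph (Fin 2)) ⊕g ((⊥ : SimpleGraph (Fin t)) □ SimpleGraph.pathGraph (t + 3))

open Finset Real

namespace HDEProof

variable {n : ℕ}

/-- real walk-vector: `aw A k x` = weighted count of `k`-walks from `x`. -/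
def aw (A : Fin n → Fin n → ℝ) : ℕ → Fin n → ℝ
  | 0, _ => 1
  | k+1, x => ∑ y, A x y * aw A k y

def pw (A : Fin n → Fin n → ℝ) (k : ℕ) : ℝ := ∑ x, aw A k x

lemma aw_succ (A : Fin n → Fin n → ℝ) (k : ℕ) (x : Fin n) :
    aw A (k+1) x = ∑ y, A x y * aw A k y := rfl

variable {A : Fin n → Fin n → ℝ}

lemma aw_nonneg (hnn : ∀ x y, 0 ≤ A x y) (k : ℕ) (x : Fin n) : 0 ≤ aw A k x := by
  induction k generalizing x with
  | zero => exact zero_le_one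
  | succ k ih => exact Finset.sum_nonneg fun y _ => mul_nonneg (hnn x y) (ih y)

lemma pw_nonneg (hnn : ∀ x y, 0 ≤ A x y) (k : ℕ) : 0 ≤ pw A k :=
  Finset.sum_nonneg fun x _ => aw_nonneg hnn k x

lemma le_aw_succ (hnn : ∀ x y, 0 ≤ A x y) (k : ℕ) (x y : Fin n) :
    A x y * aw A k y ≤ aw A (k+1) x := by
  rw [aw_succ]
  exact Finset.single_le_sum (fun z _ => mul_nonneg (hnn x z) (aw_nonneg hnn k z))
    (Finset.mem_univ y)

/-- the key shift identity -/
lemma sum_aAa (hsym : ∀ x y, A x y = A y x) (i j : ℕ) :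
    ∑ x, ∑ y, aw A i x * A x y * aw A j y = pw A (i + j + 1) := by
  induction i generalizing j with
  | zero =>
      simp only [aw, one_mul, pw, zero_add]
  | succ i ih =>
      have shift : ∑ x, ∑ y, aw A (i+1) x * A x y * aw A j y
          = ∑ x, ∑ y, aw A i x * A x y * aw A (j+1) y := by
        calc ∑ x, ∑ y, aw A (i+1) x * A x y * aw A j y
            = ∑ x, ∑ y, ∑ z, A x z * aw A i z * A x y * aw A j y := by
              simp only [aw_succ, Finset.sum_mul]
          _ = ∑ x, ∑ z, ∑ y, A x z * aw A i z * A x y * aw A j y :=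
              Finset.sum_congr rfl fun x _ => Finset.sum_comm
          _ = ∑ z, ∑ x, ∑ y, A x z * aw A i z * A x y * aw A j y := Finset.sum_comm
          _ = ∑ a, ∑ b, ∑ c, aw A i a * A a b * (A b c * aw A j c) := by
              refine Finset.sum_congr rfl fun a _ => Finset.sum_congr rfl fun b _ =>
                Finset.sum_congr rfl fun c _ => ?_
              rw [hsym b a]; ring
          _ = ∑ x, ∑ y, aw A i x * A x y * aw A (j+1) y := by
              simp only [aw_succ, Finset.mul_sum]
      rw [shift, ih (j+1)]
      congr 1
      omega

lemma pw_succ_eq (hsym : ∀ x y, A x y = A y x) (k : ℕ) :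
    pw A (k+1) = ∑ x, ∑ y, aw A k x * A x y * (1:ℝ) := by
  have := sum_aAa (A := A) hsym k 0
  simp only [aw] at this
  rw [← this]

/-- Gibbs' inequality / max-entropy bound. -/
lemma gibbs {ι : Type*} [Fintype ι] (q u : ι → ℝ) (hq : ∀ i, 0 ≤ q i) (hu : ∀ i, 0 ≤ u i)
    (hq1 : ∑ i, q i = 1) (hqu : ∀ i, 0 < q i → 0 < u i) :
    ∑ i, q i * Real.log (u i / q i) ≤ Real.log (∑ i, u i) := by
  have hex : ∃ i, 0 < q i := by
    by_contra h
    push_neg at h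
    have : ∑ i, q i = 0 := Finset.sum_eq_zero fun i _ => le_antisymm (h i) (hq i)
    rw [hq1] at this; norm_num at this
  obtain ⟨i₀, hi₀⟩ := hex
  have hS : 0 < ∑ i, u i :=
    lt_of_lt_of_le (hqu i₀ hi₀)
      (Finset.single_le_sum (fun i _ => hu i) (Finset.mem_univ i₀))
  set S := ∑ i, u i with hSdef
  have key : ∀ i, q i * Real.log (u i / q i) ≤ u i / S - q i + q i * Real.log S := by
    intro i
    rcases eq_or_lt_of_le (hq i) with h0 | hpos
    · rw [← h0]
      simp only [zero_mul, mul_zero, sub_zero, add_zero]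
      exact div_nonneg (hu i) (le_of_lt hS)
    · have hui : 0 < u i := hqu i hpos
      have h1 : Real.log (u i / q i) = Real.log (u i / (q i * S)) + Real.log S := by
        rw [← Real.log_mul (by positivity) (ne_of_gt hS)]
        congr 1
        field_simp
      rw [h1, mul_add]
      have h2 : Real.log (u i / (q i * S)) ≤ u i / (q i * S) - 1 :=
        Real.log_le_sub_one_of_pos (by positivity)
      have h3 : q i * Real.log (u i / (q i * S)) ≤ q i * (u i / (q i * S) - 1) :=
        mul_le_mul_of_nonneg_left h2 (le_of_lt hpos)
      have h4 : q i * (u i / (q i * S) - 1) = u i / S - q i := by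
        field_simp
      linarith
  calc ∑ i, q i * Real.log (u i / q i)
      ≤ ∑ i, (u i / S - q i + q i * Real.log S) := Finset.sum_le_sum fun i _ => key i
    _ = (∑ i, u i) / S - (∑ i, q i) + (∑ i, q i) * Real.log S := by
        rw [Finset.sum_add_distrib, Finset.sum_sub_distrib, ← Finset.sum_div,
          ← Finset.sum_mul]
    _ = Real.log S := by
        rw [hq1, ← hSdef, div_self (ne_of_gt hS)]; ring


/-- marginal distribution function used in the telescoping -/
noncomputable def Gf (A : Fin n → Fin n → ℝ) (t k : ℕ) : ℝ :=
  ∑ x, (aw A k x * aw A (t-k) x / pw A t) *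
    (Real.log (aw A k x) - Real.log (aw A (t-k) x))

lemma jensen (hnn : ∀ x y, 0 ≤ A x y) {t : ℕ} (hpt : 0 < pw A t) (hn : 0 < n) :
    Real.log (pw A t) - Real.log n ≤ ∑ x, (aw A t x / pw A t) * Real.log (aw A t x) := by
  set q : Fin n → ℝ := fun x => aw A t x / pw A t with hqdef
  have hq : ∀ x, 0 ≤ q x := fun x => div_nonneg (aw_nonneg hnn t x) (le_of_lt hpt)
  have hq1 : ∑ x, q x = 1 := by
    rw [hqdef]
    rw [← Finset.sum_div]
    show pw A t / pw A t = 1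
    exact div_self (ne_of_gt hpt)
  have hnR : (0:ℝ) < (n:ℝ) := by exact_mod_cast hn
  have hgibbs := gibbs q (fun _ => 1/(n:ℝ)) hq (fun _ => by positivity) hq1
    (fun _ _ => by positivity)
  have hsum1 : ∑ _x : Fin n, 1/(n:ℝ) = 1 := by
    rw [Finset.sum_const, Finset.card_univ, Fintype.card_fin, nsmul_eq_mul]
    field_simp
  rw [hsum1, Real.log_one] at hgibbs
  have hterm : ∀ x, q x * Real.log ((1/(n:ℝ)) / q x)
      = q x * (-Real.log n - Real.log (q x)) := by
    intro x
    rcases eq_or_lt_of_le (hq x) with h0 | hpos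
    · rw [← h0]; ring
    · rw [Real.log_div (by positivity) (ne_of_gt hpos), Real.log_div one_ne_zero
        (ne_of_gt hnR), Real.log_one]
      ring
  rw [Finset.sum_congr rfl (fun x _ => hterm x)] at hgibbs
  have hexp : ∑ x, q x * (-Real.log n - Real.log (q x))
      = -Real.log n - ∑ x, q x * Real.log (q x) := by
    have h' : ∀ x, q x * (-Real.log n - Real.log (q x))
        = (-Real.log n) * q x - q x * Real.log (q x) := fun x => by ring
    rw [Finset.sum_congr rfl fun x _ => h' x, Finset.sum_sub_distrib, ← Finset.mul_sum, hq1]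
    ring
  rw [hexp] at hgibbs
  have hlogq : ∑ x, q x * Real.log (aw A t x)
      = ∑ x, q x * Real.log (q x) + Real.log (pw A t) := by
    have : ∀ x, q x * Real.log (aw A t x) = q x * Real.log (q x) + q x * Real.log (pw A t) := by
      intro x
      rcases eq_or_lt_of_le (hq x) with h0 | hpos
      · rw [← h0]; ring
      · have hawpos : 0 < aw A t x := by
          have : aw A t x = q x * pw A t := by
            rw [hqdef]; field_simp
          rw [this]; exact mul_pos hpos hpt
        have : Real.log (aw A t x) = Real.log (q x) + Real.log (pw A t) := by
          rw [hqdef, Real.log_div (ne_of_gt hawpos) (ne_of_gt hpt)]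
          ring
        rw [this]; ring
    rw [Finset.sum_congr rfl (fun x _ => this x), Finset.sum_add_distrib,
      ← Finset.sum_mul, hq1, one_mul]
  rw [hlogq]
  linarith

lemma step_i (hnn : ∀ x y, 0 ≤ A x y) (hsym : ∀ x y, A x y = A y x)
    {t i : ℕ} (hi : i < t) (hpt : 0 < pw A t) :
    Real.log (pw A t) + (Gf A t (i+1) - Gf A t i) ≤ Real.log (pw A (t+2)) := by
  obtain ⟨j, hj⟩ : ∃ j, t = j + i + 1 := ⟨t - i - 1, by omega⟩
  have hj1 : t - (i+1) = j := by omega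
  have hj2 : t - i = j + 1 := by omega
  set q : Fin n × Fin n → ℝ :=
    fun p => aw A j p.1 * A p.1 p.2 * aw A i p.2 / pw A t with hqdef
  set u : Fin n × Fin n → ℝ :=
    fun p => aw A (i+1) p.1 * A p.1 p.2 * aw A (j+1) p.2 with hudef
  have hq : ∀ p, 0 ≤ q p := fun p => div_nonneg
    (mul_nonneg (mul_nonneg (aw_nonneg hnn _ _) (hnn _ _)) (aw_nonneg hnn _ _))
    (le_of_lt hpt)
  have hu : ∀ p, 0 ≤ u p := fun p =>
    mul_nonneg (mul_nonneg (aw_nonneg hnn _ _) (hnn _ _)) (aw_nonneg hnn _ _)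
  have hq1 : ∑ p, q p = 1 := by
    rw [hqdef]
    have : ∑ p : Fin n × Fin n, aw A j p.1 * A p.1 p.2 * aw A i p.2 / pw A t
        = (∑ x, ∑ y, aw A j x * A x y * aw A i y) / pw A t := by
      rw [Fintype.sum_prod_type, Finset.sum_div]
      exact Finset.sum_congr rfl fun x _ => by rw [Finset.sum_div]
    rw [this, sum_aAa hsym j i]
    have : j + i + 1 = t := by omega
    rw [this, div_self (ne_of_gt hpt)]
  have hsumu : ∑ p, u p = pw A (t+2) := by
    rw [hudef]
    have : ∑ p : Fin n × Fin n, aw A (i+1) p.1 * A p.1 p.2 * aw A (j+1) p.2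
        = ∑ x, ∑ y, aw A (i+1) x * A x y * aw A (j+1) y := by
      rw [Fintype.sum_prod_type]
    rw [this, sum_aAa hsym (i+1) (j+1)]
    congr 1
    omega
  -- positivity extraction
  have hcomp : ∀ p, 0 < q p → 0 < aw A j p.1 ∧ 0 < A p.1 p.2 ∧ 0 < aw A i p.2 := by
    intro p hp
    have hnum : 0 < aw A j p.1 * A p.1 p.2 * aw A i p.2 := by
      by_contra h
      push_neg at h
      have : q p ≤ 0 := div_nonpos_of_nonpos_of_nonneg h (le_of_lt hpt)
      linarith
    refine ⟨?_, ?_, ?_⟩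
    · rcases eq_or_lt_of_le (aw_nonneg hnn j p.1) with h | h
      · rw [← h] at hnum; simp at hnum
      · exact h
    · rcases eq_or_lt_of_le (hnn p.1 p.2) with h | h
      · rw [← h] at hnum; simp at hnum
      · exact h
    · rcases eq_or_lt_of_le (aw_nonneg hnn i p.2) with h | h
      · rw [← h] at hnum; simp at hnum
      · exact h
  have hqu : ∀ p, 0 < q p → 0 < u p := by
    intro p hp
    obtain ⟨h1, h2, h3⟩ := hcomp p hp
    have hx : 0 < aw A (i+1) p.1 := lt_of_lt_of_le (mul_pos h2 h3) (le_aw_succ hnn i p.1 p.2)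
    have hy : 0 < aw A (j+1) p.2 := by
      have := le_aw_succ hnn j p.2 p.1
      rw [hsym p.2 p.1] at this
      exact lt_of_lt_of_le (mul_pos h2 h1) this
    exact mul_pos (mul_pos hx h2) hy
  have hgibbs := gibbs q u hq hu hq1 hqu
  rw [hsumu] at hgibbs
  refine le_trans (le_of_eq ?_) hgibbs
  -- now show  log pt + (Gf (i+1) - Gf i) = ∑ p, q p * log (u p / q p)
  have hterm : ∀ p, q p * Real.log (u p / q p)
      = q p * Real.log (pw A t)
        + q p * (Real.log (aw A (i+1) p.1) - Real.log (aw A j p.1))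
        + q p * (Real.log (aw A (j+1) p.2) - Real.log (aw A i p.2)) := by
    intro p
    rcases eq_or_lt_of_le (hq p) with h0 | hpos
    · rw [← h0]; ring
    · obtain ⟨h1, h2, h3⟩ := hcomp p hpos
      have hx : 0 < aw A (i+1) p.1 := lt_of_lt_of_le (mul_pos h2 h3) (le_aw_succ hnn i p.1 p.2)
      have hy : 0 < aw A (j+1) p.2 := by
        have := le_aw_succ hnn j p.2 p.1
        rw [hsym p.2 p.1] at this
        exact lt_of_lt_of_le (mul_pos h2 h1) this
      have hval : u p / q p = pw A t * (aw A (i+1) p.1 / aw A j p.1)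
          * (aw A (j+1) p.2 / aw A i p.2) := by
        rw [hqdef, hudef]
        field_simp
      rw [hval, Real.log_mul (by positivity) (by positivity),
        Real.log_mul (ne_of_gt hpt) (by positivity),
        Real.log_div (ne_of_gt hx) (ne_of_gt h1),
        Real.log_div (ne_of_gt hy) (ne_of_gt h3)]
      ring
  rw [Finset.sum_congr rfl (fun p _ => hterm p)]
  rw [Finset.sum_add_distrib, Finset.sum_add_distrib]
  have e1 : ∑ p : Fin n × Fin n, q p * Real.log (pw A t) = Real.log (pw A t) := by
    rw [← Finset.sum_mul, hq1, one_mul]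
  have e2 : ∑ p : Fin n × Fin n,
      q p * (Real.log (aw A (i+1) p.1) - Real.log (aw A j p.1)) = Gf A t (i+1) := by
    rw [Fintype.sum_prod_type]
    unfold Gf
    rw [hj1]
    refine Finset.sum_congr rfl fun x _ => ?_
    have : ∑ y, q (x, y) * (Real.log (aw A (i+1) x) - Real.log (aw A j x))
        = (aw A j x * (Real.log (aw A (i+1) x) - Real.log (aw A j x)) / pw A t)
          * ∑ y, A x y * aw A i y := by
      rw [Finset.mul_sum]
      refine Finset.sum_congr rfl fun y _ => ?_
      rw [hqdef]
      ring
    rw [this, ← aw_succ]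
    ring
  have e3 : ∑ p : Fin n × Fin n,
      q p * (Real.log (aw A (j+1) p.2) - Real.log (aw A i p.2)) = - Gf A t i := by
    rw [Fintype.sum_prod_type, Finset.sum_comm]
    unfold Gf
    rw [hj2, ← Finset.sum_neg_distrib]
    refine Finset.sum_congr rfl fun y _ => ?_
    have : ∑ x, q (x, y) * (Real.log (aw A (j+1) y) - Real.log (aw A i y))
        = (aw A i y * (Real.log (aw A (j+1) y) - Real.log (aw A i y)) / pw A t)
          * ∑ x, A y x * aw A j x := by
      rw [Finset.mul_sum]
      refine Finset.sum_congr rfl fun x _ => ?_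
      rw [hqdef, hsym y x]
      ring
    rw [this, ← aw_succ]
    ring
  rw [e1, e2, e3]
  ring


lemma pw_zero_of_n_zero (hn : n = 0) (k : ℕ) : pw A k = 0 := by
  subst hn
  simp [pw]

/-- The core inequality: for a symmetric nonnegative `n × n` matrix,
`p_t ^ (t+2) ≤ n^2 * p_{t+2} ^ t`. -/
theorem core_ineq (hnn : ∀ x y, 0 ≤ A x y) (hsym : ∀ x y, A x y = A y x)
    (t : ℕ) (ht : 1 ≤ t) :
    pw A t ^ (t+2) ≤ (n:ℝ)^2 * pw A (t+2) ^ t := by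
  rcases eq_or_lt_of_le (pw_nonneg hnn t) with h0 | hpt
  · rw [← h0, zero_pow (by omega)]
    exact mul_nonneg (by positivity) (pow_nonneg (pw_nonneg hnn _) _)
  · -- n > 0
    have hn : 0 < n := by
      rcases Nat.eq_zero_or_pos n with h | h
      · rw [pw_zero_of_n_zero h t] at hpt; norm_num at hpt
      · exact h
    -- find a positive edge
    obtain ⟨x₀, hx₀⟩ : ∃ x, 0 < aw A t x := by
      by_contra h
      push_neg at h
      have : pw A t = 0 := le_antisymm
        (Finset.sum_nonpos fun x _ => h x) (le_of_lt hpt)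
      linarith
    obtain ⟨s, hs⟩ : ∃ s, t = s + 1 := ⟨t - 1, by omega⟩
    obtain ⟨y₀, hy₀⟩ : ∃ y, 0 < A x₀ y := by
      rw [hs, aw_succ] at hx₀
      by_contra h
      push_neg at h
      have : ∀ y ∈ (Finset.univ : Finset (Fin n)), A x₀ y * aw A s y ≤ 0 := by
        intro y _
        have h1 : A x₀ y = 0 := le_antisymm (h y) (hnn x₀ y)
        rw [h1]; simp
      have := Finset.sum_nonpos this
      linarith
    have hedge : ∀ k, 0 < aw A k x₀ ∧ 0 < aw A k y₀ := by
      intro k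
      induction k with
      | zero => exact ⟨one_pos, one_pos⟩
      | succ k ih =>
          constructor
          · exact lt_of_lt_of_le (mul_pos hy₀ ih.2) (le_aw_succ hnn k x₀ y₀)
          · have := le_aw_succ hnn k y₀ x₀
            rw [hsym y₀ x₀] at this
            exact lt_of_lt_of_le (mul_pos hy₀ ih.1) this
    have hp2 : 0 < pw A (t+2) :=
      lt_of_lt_of_le (hedge (t+2)).1
        (Finset.single_le_sum (fun z _ => aw_nonneg hnn _ z) (Finset.mem_univ x₀))
    -- telescoping sum of the per-step inequalities
    have H2 : ∑ i ∈ Finset.range t, (Real.log (pw A t) + (Gf A t (i+1) - Gf A t i))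
        ≤ t * Real.log (pw A (t+2)) := by
      calc ∑ i ∈ Finset.range t, (Real.log (pw A t) + (Gf A t (i+1) - Gf A t i))
          ≤ ∑ _i ∈ Finset.range t, Real.log (pw A (t+2)) :=
            Finset.sum_le_sum fun i hi =>
              step_i hnn hsym (Finset.mem_range.mp hi) hpt
        _ = t * Real.log (pw A (t+2)) := by
            rw [Finset.sum_const, Finset.card_range, nsmul_eq_mul]
    have H3 : ∑ i ∈ Finset.range t, (Real.log (pw A t) + (Gf A t (i+1) - Gf A t i))
        = t * Real.log (pw A t) + (Gf A t t - Gf A t 0) := by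
      rw [Finset.sum_add_distrib, Finset.sum_const, Finset.card_range, nsmul_eq_mul,
        Finset.sum_range_sub (fun k => Gf A t k)]
    have HGt : Gf A t t = ∑ x, (aw A t x / pw A t) * Real.log (aw A t x) := by
      unfold Gf
      rw [Nat.sub_self]
      refine Finset.sum_congr rfl fun x _ => ?_
      simp [aw, Real.log_one]
    have HG0 : Gf A t 0 = - ∑ x, (aw A t x / pw A t) * Real.log (aw A t x) := by
      unfold Gf
      rw [Nat.sub_zero, ← Finset.sum_neg_distrib]
      refine Finset.sum_congr rfl fun x _ => ?_
      simp [aw, Real.log_one]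
    have HJ := jensen hnn hpt hn
    set J := ∑ x, (aw A t x / pw A t) * Real.log (aw A t x) with hJ
    have main : (t:ℝ) * Real.log (pw A t) + 2 * J ≤ (t:ℝ) * Real.log (pw A (t+2)) := by
      have := H3 ▸ H2
      rw [HGt, HG0] at this
      linarith
    have hlog : Real.log (pw A t ^ (t+2)) ≤ Real.log ((n:ℝ)^2 * pw A (t+2) ^ t) := by
      rw [Real.log_pow, Real.log_mul (by positivity) (by positivity), Real.log_pow,
        Real.log_pow]
      push_cast
      nlinarith [HJ, main, Real.log_nonneg (by exact_mod_cast hn : (1:ℝ) ≤ (n:ℝ))]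
    calc pw A t ^ (t+2) = Real.exp (Real.log (pw A t ^ (t+2))) := by
          rw [Real.exp_log (pow_pos hpt _)]
      _ ≤ Real.exp (Real.log ((n:ℝ)^2 * pw A (t+2) ^ t)) := Real.exp_le_exp.mpr hlog
      _ = (n:ℝ)^2 * pw A (t+2) ^ t := Real.exp_log (by positivity)


section Counting

attribute [local instance] Classical.propDecidable

variable {n : ℕ} (G : SimpleGraph (Fin n))

/-- natural-number walk counts -/
noncomputable def bn : ℕ → Fin n → ℕ
  | 0, _ => 1
  | k+1, x => ∑ y, if G.Adj x y then bn k y else 0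

/-- real adjacency matrix -/
noncomputable def Amat : Fin n → Fin n → ℝ := fun x y => if G.Adj x y then 1 else 0

lemma Amat_nonneg : ∀ x y, 0 ≤ Amat G x y := by
  intro x y
  unfold Amat
  split <;> norm_num

lemma Amat_symm : ∀ x y, Amat G x y = Amat G y x := by
  intro x y
  unfold Amat
  rw [SimpleGraph.adj_comm]

lemma bn_cast (k : ℕ) (x : Fin n) : ((bn G k x : ℕ) : ℝ) = aw (Amat G) k x := by
  induction k generalizing x with
  | zero => simp [bn, aw]
  | succ k ih =>
      show ((∑ y, if G.Adj x y then bn G k y else 0 : ℕ) : ℝ) = _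
      rw [Nat.cast_sum, aw_succ]
      refine Finset.sum_congr rfl fun y _ => ?_
      have hA1 : G.Adj x y → Amat G x y = 1 := fun h => if_pos h
      have hA0 : ¬ G.Adj x y → Amat G x y = 0 := fun h => if_neg h
      by_cases h : G.Adj x y
      · rw [if_pos h, hA1 h, one_mul, ih]
      · rw [if_neg h, hA0 h, zero_mul, Nat.cast_zero]

lemma nat_card_sigma {ι : Type*} [Fintype ι] (F : ι → Type*) [∀ i, Finite (F i)] :
    Nat.card (Σ i, F i) = ∑ i, Nat.card (F i) := by
  letI : ∀ i, Fintype (F i) := fun i => Fintype.ofFinite _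
  simp [Nat.card_eq_fintype_card, Fintype.card_sigma]

/-- walk-functions -/
abbrev WT (m : ℕ) : Type :=
  {f : Fin (m+1) → Fin n // ∀ i : Fin m, G.Adj (f i.castSucc) (f i.succ)}

/-- walk-functions starting at `x` -/
abbrev DT (m : ℕ) (x : Fin n) : Type :=
  {f : Fin (m+1) → Fin n // f 0 = x ∧ ∀ i : Fin m, G.Adj (f i.castSucc) (f i.succ)}

def pathHomEquiv (m : ℕ) : (SimpleGraph.pathGraph (m+1) →g G) ≃ WT G m where
  toFun φ := ⟨fun i => φ i, fun i => by
    apply φ.map_rel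
    rw [SimpleGraph.pathGraph_adj]
    left
    simp⟩
  invFun f := ⟨f.1, by
    intro u v huv
    rw [SimpleGraph.pathGraph_adj] at huv
    rcases huv with h | h
    · have hu : u.val < m := by omega
      have h1 : (⟨u.val, hu⟩ : Fin m).castSucc = u := Fin.ext (by simp)
      have h2 : (⟨u.val, hu⟩ : Fin m).succ = v := Fin.ext (by simp; omega)
      have := f.2 ⟨u.val, hu⟩
      rw [h1, h2] at this
      exact this
    · have hv : v.val < m := by omega
      have h1 : (⟨v.val, hv⟩ : Fin m).castSucc = v := Fin.ext (by simp)
      have h2 : (⟨v.val, hv⟩ : Fin m).succ = u := Fin.ext (by simp; omega)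
      have := f.2 ⟨v.val, hv⟩
      rw [h1, h2] at this
      exact this.symm⟩
  left_inv φ := DFunLike.ext _ _ fun i => rfl
  right_inv f := Subtype.ext rfl

def wtSigmaEquiv (m : ℕ) : WT G m ≃ Σ x : Fin n, DT G m x where
  toFun f := ⟨f.1 0, f.1, rfl, f.2⟩
  invFun s := ⟨s.2.1, s.2.2.2⟩
  left_inv f := Subtype.ext rfl
  right_inv s := by
    obtain ⟨x, g, hg0, hadj⟩ := s
    subst hg0
    rfl

lemma dt_sigma_ext {m : ℕ} {x : Fin n} {y y' : {y // G.Adj x y}}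
    {f : DT G m y.1} {f' : DT G m y'.1}
    (hy : (y : Fin n) = (y' : Fin n)) (hf : (f.1 : Fin (m+1) → Fin n) = f'.1) :
    (⟨y, f⟩ : Σ z : {z // G.Adj x z}, DT G m z.1) = ⟨y', f'⟩ := by
  obtain ⟨y, hy1⟩ := y
  obtain ⟨y', hy2⟩ := y'
  simp only at hy
  subst hy
  have : f = f' := Subtype.ext hf
  subst this
  rfl

def dtSuccEquiv (m : ℕ) (x : Fin n) :
    DT G (m+1) x ≃ Σ y : {y // G.Adj x y}, DT G m y.1 where
  toFun f := ⟨⟨f.1 1, by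
      have h := f.2.2 0
      rw [Fin.castSucc_zero, f.2.1, Fin.succ_zero_eq_one] at h
      exact h⟩,
    ⟨fun i => f.1 i.succ, by
      refine ⟨?_, ?_⟩
      · show f.1 (Fin.succ 0) = f.1 1
        rw [Fin.succ_zero_eq_one]
      · intro i
        have h := f.2.2 i.succ
        rw [← Fin.succ_castSucc] at h
        exact h⟩⟩
  invFun s := ⟨Fin.cons x s.2.1, by
      refine ⟨Fin.cons_zero _ _, ?_⟩
      intro i
      refine Fin.cases ?_ ?_ i
      · simp only [Fin.castSucc_zero, Fin.cons_zero, Fin.cons_succ]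
        rw [s.2.2.1]
        exact s.1.2
      · intro j
        rw [← Fin.succ_castSucc]
        simp only [Fin.cons_succ]
        exact s.2.2.2 j⟩
  left_inv f := Subtype.ext (by
    funext i
    refine Fin.cases ?_ ?_ i
    · simp only [Fin.cons_zero]
      exact f.2.1.symm
    · intro j
      simp only [Fin.cons_succ])
  right_inv s := by
    obtain ⟨⟨y, hy⟩, g, hg0, hadj⟩ := s
    refine dt_sigma_ext G ?_ ?_
    · simp only
      rw [← Fin.succ_zero_eq_one, Fin.cons_succ, hg0]
    · funext i
      simp only [Fin.cons_succ]

lemma card_DT : ∀ (m : ℕ) (x : Fin n), Nat.card (DT G m x) = bn G m x := by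
  intro m
  induction m with
  | zero =>
      intro x
      have e : DT G 0 x ≃ Unit :=
        { toFun := fun _ => Unit.unit
          invFun := fun _ => ⟨fun _ => x, rfl, fun i => absurd i.2 (by omega)⟩
          left_inv := fun f => Subtype.ext (by
            funext i
            have : i = 0 := Fin.ext (by omega)
            rw [this, f.2.1])
          right_inv := fun _ => rfl }
      rw [Nat.card_congr e, Nat.card_eq_fintype_card]
      simp [bn]
  | succ m ih =>
      intro x
      rw [Nat.card_congr (dtSuccEquiv G m x), nat_card_sigma]
      show ∑ y : {y // G.Adj x y}, Nat.card (DT G m y.1) = bn G (m+1) x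
      have : ∑ y : {y // G.Adj x y}, Nat.card (DT G m y.1)
          = ∑ y : {y // G.Adj x y}, bn G m y.1 :=
        Finset.sum_congr rfl fun y _ => ih y.1
      rw [this]
      show _ = ∑ y, if G.Adj x y then bn G m y else 0
      rw [← Finset.sum_filter]
      exact (Finset.sum_subtype _ (by simp) _).symm

lemma card_pathHom (m : ℕ) :
    Nat.card (SimpleGraph.pathGraph (m+1) →g G) = ∑ x, bn G m x := by
  rw [Nat.card_congr (pathHomEquiv G m), Nat.card_congr (wtSigmaEquiv G m),
    nat_card_sigma]
  exact Finset.sum_congr rfl fun x _ => card_DT G m x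

lemma homCount_path_cast (m : ℕ) :
    ((homCount (SimpleGraph.pathGraph (m+1)) G : ℕ) : ℝ) = pw (Amat G) m := by
  unfold homCount
  rw [card_pathHom, Nat.cast_sum]
  exact Finset.sum_congr rfl fun x _ => bn_cast G m x

def sumHomEquiv {α β γ : Type*} (A : SimpleGraph α) (B : SimpleGraph β)
    (G : SimpleGraph γ) : ((A ⊕g B) →g G) ≃ (A →g G) × (B →g G) where
  toFun φ := (⟨fun a => φ (Sum.inl a), fun {u v} h => φ.map_rel h⟩,
              ⟨fun b => φ (Sum.inr b), fun {u v} h => φ.map_rel h⟩)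
  invFun p := ⟨fun x => Sum.elim p.1 p.2 x, by
      intro u v h
      match u, v with
      | Sum.inl u, Sum.inl v => exact p.1.map_rel h
      | Sum.inr u, Sum.inr v => exact p.2.map_rel h
      | Sum.inl u, Sum.inr v => simp [SimpleGraph.sum] at h
      | Sum.inr u, Sum.inl v => simp [SimpleGraph.sum] at h⟩
  left_inv φ := DFunLike.ext _ _ fun x => by cases x <;> rfl
  right_inv p := rfl

def botHomEquiv (k : ℕ) {γ : Type*} (G : SimpleGraph γ) :
    ((⊥ : SimpleGraph (Fin k)) →g G) ≃ (Fin k → γ) where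
  toFun φ := fun i => φ i
  invFun f := ⟨f, fun {u v} h => h.elim⟩
  left_inv φ := DFunLike.ext _ _ fun i => rfl
  right_inv f := rfl

def boxHomEquiv (k : ℕ) {β γ : Type*} (H : SimpleGraph β) (G : SimpleGraph γ) :
    (((⊥ : SimpleGraph (Fin k)) □ H) →g G) ≃ (Fin k → (H →g G)) where
  toFun φ := fun i => ⟨fun v => φ (i, v), fun {a b} h =>
    φ.map_rel (by rw [SimpleGraph.boxProd_adj]; exact Or.inr ⟨h, rfl⟩)⟩
  invFun F := ⟨fun p => F p.1 p.2, by
      rintro ⟨pa, pb⟩ ⟨qa, qb⟩ h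
      rw [SimpleGraph.boxProd_adj] at h
      rcases h with ⟨hb, _⟩ | ⟨hH, heq⟩
      · exact hb.elim
      · dsimp only at heq ⊢
        subst heq
        exact (F pa).map_rel hH⟩
  left_inv φ := DFunLike.ext _ _ fun p => rfl
  right_inv F := funext fun i => DFunLike.ext _ _ fun v => rfl

lemma homCount_F1 (t : ℕ) :
    homCount (F₁ t) G = n^2 * (homCount (SimpleGraph.pathGraph (t+3)) G)^t := by
  unfold homCount F₁
  rw [Nat.card_congr ((sumHomEquiv _ _ G).trans
    (Equiv.prodCongr (botHomEquiv 2 G) (boxHomEquiv t (SimpleGraph.pathGraph (t+3)) G)))]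
  rw [Nat.card_prod, Nat.card_fun, Nat.card_fun]
  simp [Nat.card_eq_fintype_card]

end Counting

section K2

attribute [local instance] Classical.propDecidable

lemma bn_K2 : ∀ (k : ℕ) (x : Fin 2), bn (SimpleGraph.pathGraph 2) k x = 1 := by
  intro k
  induction k with
  | zero => intro x; rfl
  | succ k ih =>
      intro x
      show (∑ y, if (SimpleGraph.pathGraph 2).Adj x y
        then bn (SimpleGraph.pathGraph 2) k y else 0) = 1
      rw [Fin.sum_univ_two, ih 0, ih 1]
      fin_cases x <;>
        simp [SimpleGraph.pathGraph_adj]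

lemma homCount_path_K2 (m : ℕ) :
    homCount (SimpleGraph.pathGraph (m+1)) (SimpleGraph.pathGraph 2) = 2 := by
  unfold homCount
  rw [card_pathHom, Fin.sum_univ_two, bn_K2, bn_K2]

end K2

end HDEProof

/-- For odd `t ≥ 1`, `HDE(F₁; P_t) = t + 2`, where `F₁` is the disjoint union
of two isolated vertices and `t` copies of `P_{t+2}`. -/
theorem hde_eq (t : ℕ) (ht : Odd t) (ht1 : 1 ≤ t) :
    hde (F₁ t) (SimpleGraph.pathGraph (t + 1)) = t + 2 := by
  have hadd : t + 2 + 1 = t + 3 := rfl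
  have hmem : ∀ (n : ℕ) (G : SimpleGraph (Fin n)),
      (homCount (F₁ t) G : ℝ) ≥ (homCount (SimpleGraph.pathGraph (t+1)) G : ℝ) ^ ((t:ℝ)+2) := by
    intro n G
    have hc1 : (homCount (SimpleGraph.pathGraph (t+1)) G : ℝ) = HDEProof.pw (HDEProof.Amat G) t :=
      HDEProof.homCount_path_cast G t
    have hc2' := HDEProof.homCount_path_cast G (t+2)
    rw [hadd] at hc2'
    have hc2 : (homCount (F₁ t) G : ℝ) = (n:ℝ)^2 * HDEProof.pw (HDEProof.Amat G) (t+2) ^ t := by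
      rw [HDEProof.homCount_F1 G t]
      push_cast
      rw [hc2']
    rw [hc1, hc2]
    have he : ((t:ℝ)+2) = ((t+2 : ℕ) : ℝ) := by push_cast; ring
    rw [he, Real.rpow_natCast]
    exact HDEProof.core_ineq (HDEProof.Amat_nonneg G) (HDEProof.Amat_symm G) t ht1
  have hub : ∀ c ∈ {c : ℝ | ∀ (n : ℕ) (G : SimpleGraph (Fin n)),
      (homCount (F₁ t) G : ℝ) ≥ (homCount (SimpleGraph.pathGraph (t+1)) G : ℝ) ^ c},
      c ≤ (t:ℝ) + 2 := by
    intro c hc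
    have h := hc 2 (SimpleGraph.pathGraph 2)
    have hPv : (homCount (SimpleGraph.pathGraph (t+1)) (SimpleGraph.pathGraph 2) : ℝ) = 2 := by
      rw [HDEProof.homCount_path_K2 t]
      norm_num
    have hFv : (homCount (F₁ t) (SimpleGraph.pathGraph 2) : ℝ) = (2:ℝ)^(t+2) := by
      rw [HDEProof.homCount_F1 (SimpleGraph.pathGraph 2) t]
      have h2 := HDEProof.homCount_path_K2 (t+2)
      rw [hadd] at h2
      rw [h2]
      push_cast
      rw [pow_add]
      norm_num
      ring
    rw [hPv, hFv] at h
    have h2 : (2:ℝ)^c ≤ (2:ℝ)^(((t+2:ℕ)):ℝ) := by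
      rw [Real.rpow_natCast]
      exact_mod_cast h
    have h3 := (Real.rpow_le_rpow_left_iff (by norm_num : (1:ℝ) < 2)).mp h2
    push_cast at h3
    linarith
  unfold hde
  apply le_antisymm
  · exact csSup_le ⟨_, hmem⟩ hub
  · exact le_csSup ⟨(t:ℝ)+2, hub⟩ hmem
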